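/- Let H be a finite abelian group containing a border tricolored sum-free set of cardinality |M| and range t. Then for every natural number N there exists a (genuine) tricolored sum-free set in H^N of cardinality at least |M|^N / (2Nt+1)^3. -/
import Mathlib


open Finset

/-- A tricolored sum-free set in an abelian group `H`, encoded as the
3-dimensional perfect matching `M` itself (a finite set of triples):
every triple of `M` sums to zero, and whenever a "mixed" triple
`(p.1, q.2.1, r.2.2)` with `p q r ∈ M` sums to zero we must have `p = q = r`
(this encodes both the perfect-matching property and that no other triple of
`S × T × U` sums to zero, where `S, T, U` are the projections of `M`). -/
def IsTricoloredSumFree {H : Type*} [AddCommGroup H] (M : Finset (H × H × H)) : Prop :=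
  (∀ p ∈ M, p.1 + p.2.1 + p.2.2 = 0) ∧
  (∀ p ∈ M, ∀ q ∈ M, ∀ r ∈ M, p.1 + q.2.1 + r.2.2 = 0 → p = q ∧ q = r)

/-- If a finite abelian group `H` contains a border tricolored sum-free set of
cardinality `|M|` and range `t`, then for every `N` there is a genuine
tricolored sum-free set in `H^N` of cardinality at least `|M|^N/(2Nt+1)³`. -/
theorem exists_tricolored_of_border {H : Type*} [AddCommGroup H] [Fintype H]
    [DecidableEq H] (M : Finset (H × H × H)) (α β γ : H → ℤ) (t : ℕ)
    (hzero : ∀ p ∈ M, p.1 + p.2.1 + p.2.2 = 0 ∧ α p.1 + β p.2.1 + γ p.2.2 = 0)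
    (hoff : ∀ p ∈ M, ∀ q ∈ M, ∀ s ∈ M, p.1 + q.2.1 + s.2.2 = 0 →
      α p.1 + β q.2.1 + γ s.2.2 ≤ 0 → p = q ∧ q = s)
    (hrange : ∀ p ∈ M, |α p.1| ≤ (t : ℤ) ∧ |β p.2.1| ≤ (t : ℤ) ∧ |γ p.2.2| ≤ (t : ℤ))
    (N : ℕ) :
    ∃ M' : Finset ((Fin N → H) × (Fin N → H) × (Fin N → H)),
      IsTricoloredSumFree M' ∧ M.card ^ N ≤ M'.card * (2 * N * t + 1) ^ 3 := by
  classical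
  set T : Finset (Fin N → H × H × H) := Fintype.piFinset fun _ => M with hT
  set F : (Fin N → H × H × H) → ℤ × ℤ × ℤ :=
    fun p => (∑ i, α (p i).1, ∑ i, β (p i).2.1, ∑ i, γ (p i).2.2) with hF
  set J : Finset ℤ := Finset.Icc (-(N * t : ℤ)) (N * t) with hJ
  set I : Finset (ℤ × ℤ × ℤ) := J ×ˢ J ×ˢ J with hI
  have hJcard : J.card = 2 * N * t + 1 := by
    rw [hJ, Int.card_Icc]
    have hc : ((N:ℤ) * t) = ((N * t : ℕ) : ℤ) := by push_cast; ring
    rw [hc, show 2 * N * t + 1 = 2 * (N * t) + 1 from by ring]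
    omega
  have hIcard : I.card = (2 * N * t + 1) ^ 3 := by
    rw [hI, Finset.card_product, Finset.card_product, hJcard]; ring
  have hTcard : T.card = M.card ^ N := by
    simp [hT, Fintype.card_piFinset]
  have hmem : ∀ p ∈ T, ∀ i, p i ∈ M := by
    intro p hp i
    exact Fintype.mem_piFinset.mp hp i
  have hbound : ∀ (f : Fin N → ℤ), (∀ i, |f i| ≤ (t : ℤ)) → (∑ i, f i) ∈ J := by
    intro f hf
    rw [hJ, Finset.mem_Icc, ← abs_le]
    calc |∑ i, f i| ≤ ∑ i, |f i| := Finset.abs_sum_le_sum_abs _ _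
      _ ≤ ∑ _i : Fin N, (t : ℤ) := Finset.sum_le_sum fun i _ => hf i
      _ = (N * t : ℤ) := by simp [mul_comm]
  have hmaps : ∀ p ∈ T, F p ∈ I := by
    intro p hp
    rw [hI, Finset.mem_product, Finset.mem_product]
    exact ⟨hbound _ fun i => (hrange _ (hmem p hp i)).1,
      hbound _ fun i => (hrange _ (hmem p hp i)).2.1,
      hbound _ fun i => (hrange _ (hmem p hp i)).2.2⟩
  have hsum : ∑ y ∈ I, (T.filter fun p => F p = y).card = T.card :=
    (Finset.card_eq_sum_card_fiberwise hmaps).symm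
  have hInon : I.Nonempty := by
    refine ⟨(0, 0, 0), ?_⟩
    rw [hI, Finset.mem_product, Finset.mem_product]
    have h0 : (0:ℤ) ≤ (N:ℤ) * t := by positivity
    have : (0 : ℤ) ∈ J := by rw [hJ, Finset.mem_Icc]; exact ⟨by linarith, h0⟩
    exact ⟨this, this, this⟩
  obtain ⟨y, hy, hle⟩ : ∃ y ∈ I, T.card ≤ I.card * (T.filter fun p => F p = y).card := by
    apply Finset.exists_le_of_sum_le hInon
    rw [← Finset.mul_sum, hsum, Finset.sum_const, smul_eq_mul]
  set B : Finset (Fin N → H × H × H) := T.filter fun p => F p = y with hB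
  set g : (Fin N → H × H × H) → (Fin N → H) × (Fin N → H) × (Fin N → H) :=
    fun p => (fun i => (p i).1, fun i => (p i).2.1, fun i => (p i).2.2) with hg
  have hginj : Function.Injective g := by
    intro p q h
    funext i
    have h1 := congrFun (congrArg Prod.fst h) i
    have h2 := congrFun (congrArg (fun x => x.2.1) h) i
    have h3 := congrFun (congrArg (fun x => x.2.2) h) i
    exact Prod.ext h1 (Prod.ext h2 h3)
  refine ⟨B.image g, ⟨?_, ?_⟩, ?_⟩
  · rintro p' hp'
    obtain ⟨p, hpB, rfl⟩ := Finset.mem_image.mp hp'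
    have hpT : p ∈ T := (Finset.mem_filter.mp hpB).1
    funext i
    simpa using (hzero _ (hmem p hpT i)).1
  · rintro p' hp' q' hq' r' hr' hsum0
    obtain ⟨p, hpB, rfl⟩ := Finset.mem_image.mp hp'
    obtain ⟨q, hqB, rfl⟩ := Finset.mem_image.mp hq'
    obtain ⟨r, hrB, rfl⟩ := Finset.mem_image.mp hr'
    have hpT : p ∈ T := (Finset.mem_filter.mp hpB).1
    have hqT : q ∈ T := (Finset.mem_filter.mp hqB).1
    have hrT : r ∈ T := (Finset.mem_filter.mp hrB).1
    have hpF : F p = y := (Finset.mem_filter.mp hpB).2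
    have hqF : F q = y := (Finset.mem_filter.mp hqB).2
    have hrF : F r = y := (Finset.mem_filter.mp hrB).2
    have heqi : ∀ i, (p i).1 + (q i).2.1 + (r i).2.2 = 0 := by
      intro i
      simpa using congrFun hsum0 i
    set v : Fin N → ℤ := fun i => α (p i).1 + β (q i).2.1 + γ (r i).2.2 with hv
    have hvnn : ∀ i, 0 ≤ v i := by
      intro i
      by_contra hneg
      push_neg at hneg
      obtain ⟨e1, e2⟩ := hoff _ (hmem p hpT i) _ (hmem q hqT i) _ (hmem r hrT i)
        (heqi i) hneg.le
      have := (hzero _ (hmem p hpT i)).2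
      rw [hv] at hneg
      simp only at hneg
      rw [← e1, ← e2, ← e1] at hneg
      omega
    have hy0 : y.1 + y.2.1 + y.2.2 = 0 := by
      rw [← hpF, hF]
      simp only
      rw [← Finset.sum_add_distrib, ← Finset.sum_add_distrib]
      exact Finset.sum_eq_zero fun i _ => (hzero _ (hmem p hpT i)).2
    have hsumv : ∑ i, v i = 0 := by
      have h1 : ∑ i, α (p i).1 = y.1 := congrArg Prod.fst hpF
      have h2 : ∑ i, β (q i).2.1 = y.2.1 := congrArg (fun x => x.2.1) hqF
      have h3 : ∑ i, γ (r i).2.2 = y.2.2 := congrArg (fun x => x.2.2) hrF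
      calc ∑ i, v i = (∑ i, α (p i).1) + (∑ i, β (q i).2.1) + (∑ i, γ (r i).2.2) := by
            rw [hv, Finset.sum_add_distrib, Finset.sum_add_distrib]
        _ = 0 := by rw [h1, h2, h3, hy0]
    have hall : ∀ i, p i = q i ∧ q i = r i := by
      intro i
      have hvi : v i = 0 := by
        have := (Finset.sum_eq_zero_iff_of_nonneg fun i _ => hvnn i).mp hsumv i
          (Finset.mem_univ i)
        exact this
      exact hoff _ (hmem p hpT i) _ (hmem q hqT i) _ (hmem r hrT i) (heqi i) hvi.le
    have hpq : p = q := funext fun i => (hall i).1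
    have hqr : q = r := funext fun i => (hall i).2
    exact ⟨by rw [hpq], by rw [hqr]⟩
  · rw [Finset.card_image_of_injective _ hginj]
    calc M.card ^ N = T.card := hTcard.symm
      _ ≤ I.card * B.card := hle
      _ = B.card * (2 * N * t + 1) ^ 3 := by rw [hIcard, mul_comm]
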